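/- arXiv:2012.12552 — 2 statements merged into one kernel-verified Lean document; each statement's English description precedes it below -/
import Mathlib

section
/- Let κ be strictly conditionally positive definite of order l on ℝ^d, X = {x_1, …, x_n} ⊆ ℝ^d a set of distinct points that is (l−1)-unisolvent, A the n×n matrix A_{ik} = κ(x_i, x_k), and P the n×m matrix P_{ij} = p_j(x_i) for a basis p_1, …, p_m of polynomials of total degree ≤ l−1 in d variables. Then the block matrix [[A, P], [Pᵀ, O]] is invertible, so the interpolation system with polynomial reproduction constraints has a unique solution. -/
open MvPolynomial Matrix

/-- Let `κ` be a symmetric kernel on `ℝ^d` that is strictly conditionally positive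
definite of order `l`, let `x 1, …, x n` be distinct points forming an
`(l−1)`-unisolvent set, let `A` be the kernel matrix `A i k = κ (x i) (x k)` and `P`
the collocation matrix `P i j = p j (x i)` for a basis `p 1, …, p m` of the space of
polynomials of total degree ≤ `l − 1` in `d` variables.  Then the block matrix
`[[A, P], [Pᵀ, O]]` is invertible, so the interpolation system with polynomial
reproduction constraints has a unique solution. -/
theorem cpd_interpolation_block_matrix_invertible (d l n m : ℕ)
    (κ : (Fin d → ℝ) → (Fin d → ℝ) → ℝ)
    (hsym : ∀ u v, κ u v = κ v u)
    (hκ : ∀ (N : ℕ) (u : Fin N → (Fin d → ℝ)), Function.Injective u →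
      ∀ c : Fin N → ℝ, c ≠ 0 →
        (∀ p : MvPolynomial (Fin d) ℝ, p.totalDegree ≤ l - 1 →
          ∑ i, c i * eval (u i) p = 0) →
        0 < ∑ i, ∑ j, c i * c j * κ (u i) (u j))
    (x : Fin n → (Fin d → ℝ)) (hx : Function.Injective x)
    (b : Module.Basis (Fin m) ℝ (MvPolynomial.restrictTotalDegree (Fin d) ℝ (l - 1)))
    (hunisolvent : ∀ p : MvPolynomial (Fin d) ℝ, p.totalDegree ≤ l - 1 →
      (∀ i, eval (x i) p = 0) → p = 0)
    (A : Matrix (Fin n) (Fin n) ℝ) (hA : ∀ i k, A i k = κ (x i) (x k))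
    (P : Matrix (Fin n) (Fin m) ℝ) (hP : ∀ i j, P i j = eval (x i) ((b j : MvPolynomial (Fin d) ℝ))) :
    IsUnit (Matrix.fromBlocks A P Pᵀ (0 : Matrix (Fin m) (Fin m) ℝ)) := by
  set M := Matrix.fromBlocks A P Pᵀ (0 : Matrix (Fin m) (Fin m) ℝ) with hM
  rw [Matrix.isUnit_iff_isUnit_det, isUnit_iff_ne_zero]
  intro hdet
  rw [← Matrix.exists_mulVec_eq_zero_iff] at hdet
  obtain ⟨v, hv0, hv⟩ := hdet
  set c : Fin n → ℝ := fun i => v (Sum.inl i) with hc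
  set μ : Fin m → ℝ := fun j => v (Sum.inr j) with hμ
  -- the two block equations
  have h1 : ∀ i : Fin n, (∑ k, A i k * c k) + (∑ j, P i j * μ j) = 0 := by
    intro i
    have := congrFun hv (Sum.inl i)
    simpa [M, Matrix.mulVec, dotProduct, Fintype.sum_sum_type, c, μ] using this
  have h2 : ∀ j : Fin m, ∑ i, c i * P i j = 0 := by
    intro j
    have := congrFun hv (Sum.inr j)
    simpa [M, Matrix.mulVec, dotProduct, Fintype.sum_sum_type, c, μ,
      Matrix.transpose_apply, mul_comm] using this
  -- c is "orthogonal" to all polynomials of degree ≤ l-1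
  have hortho : ∀ p : MvPolynomial (Fin d) ℝ, p.totalDegree ≤ l - 1 →
      ∑ i, c i * eval (x i) p = 0 := by
    intro p hp
    have hmem : p ∈ MvPolynomial.restrictTotalDegree (Fin d) ℝ (l - 1) :=
      (MvPolynomial.mem_restrictTotalDegree _ _ _).mpr hp
    set q : MvPolynomial.restrictTotalDegree (Fin d) ℝ (l - 1) := ⟨p, hmem⟩
    have hq : (∑ j, b.repr q j • b j) = q := b.sum_repr q
    have hq' : p = ∑ j, b.repr q j • ((b j : MvPolynomial (Fin d) ℝ)) := by
      have := congrArg (Subtype.val) hq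
      rw [Submodule.coe_sum] at this
      simp only [Submodule.coe_smul] at this
      exact this.symm
    calc ∑ i, c i * eval (x i) p
        = ∑ i, c i * ∑ j, b.repr q j * eval (x i) ((b j : MvPolynomial (Fin d) ℝ)) := by
          refine Finset.sum_congr rfl fun i _ => ?_
          rw [hq']
          simp [smul_eq_mul]
      _ = ∑ j, b.repr q j * ∑ i, c i * P i j := by
          simp_rw [Finset.mul_sum]
          rw [Finset.sum_comm]
          refine Finset.sum_congr rfl fun j _ => Finset.sum_congr rfl fun i _ => ?_
          rw [hP]; ring
      _ = 0 := by simp [h2]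
  -- c = 0
  have hc0 : c = 0 := by
    by_contra hne
    have hpos := hκ n x hx c hne hortho
    -- compute cᵀ A c = 0
    have hAc : ∑ i, ∑ k, c i * c k * κ (x i) (x k) = 0 := by
      have e1 : ∑ i, c i * ((∑ k, A i k * c k) + (∑ j, P i j * μ j)) = 0 := by
        simp [h1]
      have e2 : ∑ i, c i * (∑ j, P i j * μ j) = 0 := by
        simp_rw [Finset.mul_sum]
        rw [Finset.sum_comm]
        calc ∑ j, ∑ i, c i * (P i j * μ j)
            = ∑ j, μ j * ∑ i, c i * P i j := by
              refine Finset.sum_congr rfl fun j _ => ?_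
              rw [Finset.mul_sum]
              exact Finset.sum_congr rfl fun i _ => by ring
          _ = 0 := by simp [h2]
      have e3 : ∑ i, c i * (∑ k, A i k * c k) = 0 := by
        have := e1
        simp_rw [mul_add] at this
        rw [Finset.sum_add_distrib, e2, add_zero] at this
        exact this
      calc ∑ i, ∑ k, c i * c k * κ (x i) (x k)
          = ∑ i, c i * (∑ k, A i k * c k) := by
            refine Finset.sum_congr rfl fun i _ => ?_
            rw [Finset.mul_sum]
            refine Finset.sum_congr rfl fun k _ => ?_
            rw [hA]; ring
        _ = 0 := e3
    rw [hAc] at hpos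
    exact lt_irrefl 0 hpos
  -- then P μ = 0, so the polynomial ∑ μ j • b j vanishes at all x i
  have hPμ : ∀ i, ∑ j, P i j * μ j = 0 := by
    intro i
    have := h1 i
    simp only [hc0, Pi.zero_apply, mul_zero, zero_mul] at this
    simpa using this
  have hμ0 : μ = 0 := by
    set q : MvPolynomial.restrictTotalDegree (Fin d) ℝ (l - 1) := ∑ j, μ j • b j with hqdef
    have hqz : (q : MvPolynomial (Fin d) ℝ) = 0 := by
      refine hunisolvent _ ((MvPolynomial.mem_restrictTotalDegree _ _ _).mp q.2) ?_
      intro i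
      have : (q : MvPolynomial (Fin d) ℝ) = ∑ j, μ j • ((b j : MvPolynomial (Fin d) ℝ)) := by
        simp [hqdef]
      rw [this]
      calc eval (x i) (∑ j, μ j • ((b j : MvPolynomial (Fin d) ℝ)))
          = ∑ j, μ j * eval (x i) ((b j : MvPolynomial (Fin d) ℝ)) := by
            simp [smul_eq_mul]
        _ = ∑ j, P i j * μ j := by
            refine Finset.sum_congr rfl fun j _ => ?_
            rw [hP]; ring
        _ = 0 := hPμ i
    have hq0 : q = 0 := Subtype.ext hqz
    have : ∀ j, μ j = 0 := by
      have hli := b.linearIndependent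
      rw [Fintype.linearIndependent_iff] at hli
      exact hli μ (by simpa [hqdef] using hq0)
    funext j; exact this j
  apply hv0
  funext s
  cases s with
  | inl i => exact congrFun hc0 i
  | inr j => exact congrFun hμ0 j
end

section
/- The cubic radial function φ(r) = r³ on ℝ (i.e., the kernel κ(x, y) = |x − y|³) is strictly conditionally positive definite of order 2 on ℝ: for any distinct x_1, …, x_n ∈ ℝ and nonzero c ∈ ℝ^n with Σ c_i = 0 and Σ c_i x_i = 0, one has Σ_{i,j} c_i c_j |x_i − x_j|³ > 0. -/
open MeasureTheory

/-- Integrability of the tent product. -/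
lemma tent_integrable (a b : ℝ) :
    Integrable (fun t : ℝ => max (t - a) 0 * max (b - t) 0) := by
  apply Continuous.integrable_of_hasCompactSupport
  · exact ((continuous_id.sub continuous_const).max continuous_const).mul
      ((continuous_const.sub continuous_id).max continuous_const)
  · apply HasCompactSupport.intro (isCompact_Icc (a := a) (b := b))
    intro t ht
    rcases not_and_or.mp ((Set.mem_Icc (a := a) (b := b)).not.mp ht) with h | h
    · rw [max_eq_right (by linarith [lt_of_not_ge h] : t - a ≤ 0)]; ring
    · rw [max_eq_right (by linarith [lt_of_not_ge h] : b - t ≤ 0)]; ring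

/-- The key integral. -/
lemma tent_integral (a b : ℝ) :
    ∫ t : ℝ, max (t - a) 0 * max (b - t) 0 = max (b - a) 0 ^ 3 / 6 := by
  rcases le_or_gt b a with hba | hab
  · have : (fun t : ℝ => max (t - a) 0 * max (b - t) 0) = fun _ => 0 := by
      funext t
      rcases le_or_gt t a with h | h
      · rw [max_eq_right (by linarith : t - a ≤ 0)]; ring
      · rw [max_eq_right (by linarith : b - t ≤ 0)]; ring
    rw [this, integral_zero, max_eq_right (by linarith : b - a ≤ 0)]
    norm_num
  · have hind : (fun t : ℝ => max (t - a) 0 * max (b - t) 0)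
        = (Set.Icc a b).indicator (fun t => (t - a) * (b - t)) := by
      funext t
      by_cases ht : t ∈ Set.Icc a b
      · rw [Set.indicator_of_mem ht]
        obtain ⟨h1, h2⟩ := ht
        rw [max_eq_left (by linarith), max_eq_left (by linarith)]
      · rw [Set.indicator_of_notMem ht]
        rcases not_and_or.mp ((Set.mem_Icc (a := a) (b := b)).not.mp ht) with h | h
        · rw [max_eq_right (by linarith [lt_of_not_ge h] : t - a ≤ 0)]; ring
        · rw [max_eq_right (by linarith [lt_of_not_ge h] : b - t ≤ 0)]; ring
    rw [hind, integral_indicator measurableSet_Icc, integral_Icc_eq_integral_Ioc,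
      ← intervalIntegral.integral_of_le hab.le]
    have hF : ∀ t : ℝ, HasDerivAt (fun t : ℝ => -t^3/3 + (a+b)*t^2/2 - a*b*t)
        ((t - a) * (b - t)) t := by
      intro t
      have h1 : HasDerivAt (fun t : ℝ => t^3) (3 * t^2) t := by
        simpa using hasDerivAt_pow 3 t
      have h2 : HasDerivAt (fun t : ℝ => t^2) (2 * t) t := by
        simpa using hasDerivAt_pow 2 t
      have := (((h1.div_const 3).neg.add (((h2.const_mul (a+b)).div_const 2))).sub
        (HasDerivAt.const_mul (a*b) (hasDerivAt_id' (x := t))))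
      have hfun : (fun t : ℝ => -t^3/3 + (a+b)*t^2/2 - a*b*t)
          = ((-fun x : ℝ => x^3/3) + fun x => (a+b)*x^2/2) - fun y => a*b*y := by
        funext s; simp only [Pi.add_apply, Pi.sub_apply, Pi.neg_apply]; ring
      rw [hfun]
      exact this.congr_deriv (by ring)
    rw [intervalIntegral.integral_eq_sub_of_hasDerivAt (fun t _ => hF t)
      (Continuous.intervalIntegrable (by continuity) a b)]
    rw [max_eq_left (by linarith)]
    ring

/-- The cubic radial kernel `κ(x,y) = |x − y|³` is strictly conditionally positive
definite of order `2` on `ℝ`: for any distinct `x 1, …, x n ∈ ℝ` and nonzero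
`c ∈ ℝ^n` with `Σ c i = 0` and `Σ c i * x i = 0`, one has
`Σ_{i,j} c i * c j * |x i − x j|³ > 0`. -/
theorem cubic_kernel_scpd_order_two (n : ℕ) (x : Fin n → ℝ)
    (hx : Function.Injective x) (c : Fin n → ℝ) (hc : c ≠ 0)
    (h0 : ∑ i, c i = 0) (h1 : ∑ i, c i * x i = 0) :
    0 < ∑ i, ∑ j, c i * c j * |x i - x j| ^ 3 := by
  classical
  set h : ℝ → ℝ := fun t => ∑ i, c i * max (t - x i) 0 with hdef
  -- linear moments vanish
  have hlin : ∀ t : ℝ, ∑ i, c i * (t - x i) = 0 := by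
    intro t
    have : ∑ i, c i * (t - x i) = t * (∑ i, c i) - ∑ i, c i * x i := by
      rw [Finset.mul_sum, ← Finset.sum_sub_distrib]
      exact Finset.sum_congr rfl fun i _ => by ring
    rw [this, h0, h1]; ring
  -- alternative representation of h
  have hrep : ∀ t : ℝ, h t = ∑ i, c i * max (x i - t) 0 := by
    intro t
    have key : h t - ∑ i, c i * max (x i - t) 0 = ∑ i, c i * (t - x i) := by
      rw [hdef, ← Finset.sum_sub_distrib]
      refine Finset.sum_congr rfl fun i _ => ?_
      rw [← mul_sub]
      congr 1
      rcases le_total (x i) t with hle | hle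
      · rw [max_eq_left (by linarith), max_eq_right (by linarith)]; ring
      · rw [max_eq_right (by linarith), max_eq_left (by linarith)]; ring
    have := hlin t
    linarith [key]
  -- square expansion
  have hsq : ∀ t : ℝ, h t ^ 2
      = ∑ i, ∑ j, c i * c j * (max (t - x i) 0 * max (x j - t) 0) := by
    intro t
    have : h t ^ 2 = (∑ i, c i * max (t - x i) 0) * (∑ j, c j * max (x j - t) 0) := by
      rw [sq, ← hrep t, hdef]
    rw [this, Finset.sum_mul_sum]
    exact Finset.sum_congr rfl fun i _ => Finset.sum_congr rfl fun j _ => by ring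
  -- integrability of each summand
  have hint : ∀ i j : Fin n,
      Integrable (fun t : ℝ => c i * c j * (max (t - x i) 0 * max (x j - t) 0)) :=
    fun i j => (tent_integrable (x i) (x j)).const_mul _
  -- the integral identity
  have key : ∫ t : ℝ, h t ^ 2 = ∑ i, ∑ j, c i * c j * (max (x j - x i) 0 ^ 3 / 6) := by
    rw [show (fun t : ℝ => h t ^ 2)
        = fun t : ℝ => ∑ i, ∑ j, c i * c j * (max (t - x i) 0 * max (x j - t) 0)
      from funext hsq]
    rw [integral_finset_sum _ fun i _ => integrable_finset_sum _ fun j _ => hint i j]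
    refine Finset.sum_congr rfl fun i _ => ?_
    rw [integral_finset_sum _ fun j _ => hint i j]
    refine Finset.sum_congr rfl fun j _ => ?_
    rw [integral_const_mul, tent_integral]
  -- the quadratic form equals 12 times the integral
  have hform : ∑ i, ∑ j, c i * c j * |x i - x j| ^ 3 = 12 * ∫ t : ℝ, h t ^ 2 := by
    rw [key, Finset.mul_sum]
    have habs : ∀ i j : Fin n,
        |x i - x j| ^ 3 = max (x i - x j) 0 ^ 3 + max (x j - x i) 0 ^ 3 := by
      intro i j
      rcases le_total (x j) (x i) with hle | hle
      · rw [abs_of_nonneg (by linarith), max_eq_left (by linarith),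
          max_eq_right (by linarith)]; ring
      · rw [abs_of_nonpos (by linarith), max_eq_right (by linarith),
          max_eq_left (by linarith)]; ring
    have hswap : ∑ i, ∑ j, c i * c j * max (x i - x j) 0 ^ 3
        = ∑ i, ∑ j, c i * c j * max (x j - x i) 0 ^ 3 := by
      rw [Finset.sum_comm]
      exact Finset.sum_congr rfl fun i _ => Finset.sum_congr rfl fun j _ => by ring
    calc ∑ i, ∑ j, c i * c j * |x i - x j| ^ 3
        = ∑ i, ∑ j, (c i * c j * max (x i - x j) 0 ^ 3
            + c i * c j * max (x j - x i) 0 ^ 3) := by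
          refine Finset.sum_congr rfl fun i _ => Finset.sum_congr rfl fun j _ => ?_
          rw [habs i j]; ring
      _ = (∑ i, ∑ j, c i * c j * max (x i - x j) 0 ^ 3)
            + ∑ i, ∑ j, c i * c j * max (x j - x i) 0 ^ 3 := by
          rw [← Finset.sum_add_distrib]
          exact Finset.sum_congr rfl fun i _ => Finset.sum_add_distrib
      _ = 2 * ∑ i, ∑ j, c i * c j * max (x j - x i) 0 ^ 3 := by rw [hswap]; ring
      _ = ∑ i, 12 * ∑ j, c i * c j * (max (x j - x i) 0 ^ 3 / 6) := by
          rw [Finset.mul_sum]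
          refine Finset.sum_congr rfl fun i _ => ?_
          rw [Finset.mul_sum, Finset.mul_sum]
          exact Finset.sum_congr rfl fun j _ => by ring
  -- h is continuous
  have hcont : Continuous h := by
    apply continuous_finset_sum
    exact fun i _ => continuous_const.mul
      ((continuous_id.sub continuous_const).max continuous_const)
  -- h is nonzero somewhere
  have hne : ∃ t₀ : ℝ, h t₀ ≠ 0 := by
    obtain ⟨i₀, hi₀⟩ := Function.ne_iff.mp hc
    set S : Finset (Fin n) := Finset.univ.filter (fun i => c i ≠ 0) with hS
    have hi₀S : i₀ ∈ S := Finset.mem_filter.mpr ⟨Finset.mem_univ _, hi₀⟩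
    obtain ⟨im, himS, hmax⟩ := S.exists_max_image x ⟨i₀, hi₀S⟩
    have hcim : c im ≠ 0 := (Finset.mem_filter.mp himS).2
    -- S has another element
    have hT : (S.erase im).Nonempty := by
      by_contra hempty
      rw [Finset.not_nonempty_iff_eq_empty] at hempty
      have : ∀ i, i ≠ im → c i = 0 := by
        intro i hii
        by_contra hci
        have : i ∈ S.erase im := Finset.mem_erase.mpr
          ⟨hii, Finset.mem_filter.mpr ⟨Finset.mem_univ _, hci⟩⟩
        simp [hempty] at this
      have : ∑ i, c i = c im := by
        rw [← Finset.sum_subset (Finset.subset_univ {im})]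
        · simp
        · intro i _ hi
          exact this i (by simpa using hi)
      exact hcim (by rw [← this, h0])
    set M : ℝ := (S.erase im).sup' hT x with hM
    have hMlt : M < x im := by
      obtain ⟨j, hjT, hjM⟩ := Finset.exists_mem_eq_sup' hT x
      rw [hM, hjM]
      obtain ⟨hji, hjS⟩ := Finset.mem_erase.mp hjT
      exact lt_of_le_of_ne (hmax j hjS) (fun he => hji (hx he))
    set t₀ : ℝ := (M + x im) / 2 with ht₀
    have ht₀lt : t₀ < x im := by rw [ht₀]; linarith
    have hMt₀ : M < t₀ := by rw [ht₀]; linarith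
    refine ⟨t₀, ?_⟩
    have hterm : ∀ i : Fin n, c i * max (t₀ - x i) 0
        = c i * (t₀ - x i) - (if i = im then c im * (t₀ - x im) else 0) := by
      intro i
      by_cases hii : i = im
      · subst hii
        rw [if_pos rfl, max_eq_right (by linarith)]; ring
      · rw [if_neg hii]
        by_cases hci : c i = 0
        · rw [hci]; ring
        · have hiT : i ∈ S.erase im := Finset.mem_erase.mpr
            ⟨hii, Finset.mem_filter.mpr ⟨Finset.mem_univ _, hci⟩⟩
          have : x i ≤ M := Finset.le_sup' x hiT
          rw [max_eq_left (by linarith)]; ring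
    have : h t₀ = - (c im * (t₀ - x im)) := by
      rw [hdef]
      simp only [hterm]
      rw [Finset.sum_sub_distrib, hlin t₀, Finset.sum_ite_eq' Finset.univ im
        (fun _ => c im * (t₀ - x im))]
      simp
    rw [this]
    intro habs0
    have : c im * (t₀ - x im) = 0 := by linarith [neg_eq_zero.mp habs0]
    rcases mul_eq_zero.mp this with h' | h'
    · exact hcim h'
    · linarith
  -- the integral is positive
  have hpos : 0 < ∫ t : ℝ, h t ^ 2 := by
    have hinteg : Integrable (fun t : ℝ => h t ^ 2) := by
      rw [show (fun t : ℝ => h t ^ 2)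
          = fun t : ℝ => ∑ i, ∑ j, c i * c j * (max (t - x i) 0 * max (x j - t) 0)
        from funext hsq]
      exact integrable_finset_sum _ fun i _ => integrable_finset_sum _ fun j _ => hint i j
    rw [integral_pos_iff_support_of_nonneg (fun t => sq_nonneg (h t)) hinteg]
    obtain ⟨t₀, ht₀⟩ := hne
    have hopen : IsOpen {t : ℝ | h t ≠ 0} := isOpen_ne.preimage hcont
    have hsub : {t : ℝ | h t ≠ 0} ⊆ Function.support (fun t => h t ^ 2) := by
      intro t ht
      simp only [Function.mem_support]
      exact pow_ne_zero 2 ht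
    calc (0 : ENNReal) < volume {t : ℝ | h t ≠ 0} := hopen.measure_pos volume ⟨t₀, ht₀⟩
      _ ≤ volume (Function.support fun t => h t ^ 2) := measure_mono hsub
  rw [hform]
  linarith
end
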